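/- A permutation avoids the barred pattern 41\bar{3}52 if and only if it avoids the vincular pattern 3[14]2; that is, Av(41\bar{3}52) = Av(3[14]2). -/

import Mathlib

/-- The type of permutations of arbitrary (finite) length: a permutation of
length `n`, written in one-line notation as `w 0, w 1, …, w (n-1)` (using
0-indexed positions and values), is a bijection of `Fin n`. -/
def Permutation : Type := Σ n : ℕ, Equiv.Perm (Fin n)

/-- `f` is an occurrence of the classical pattern `p` in `w`: `f` selects
positions, in increasing order, whose values in `w` are order-isomorphic
to `p`. -/
def IsOcc {k n : ℕ} (p : Equiv.Perm (Fin k)) (w : Equiv.Perm (Fin n))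
    (f : Fin k → Fin n) : Prop :=
  StrictMono f ∧ ∀ i j : Fin k, p i < p j ↔ w (f i) < w (f j)

/-- The permutation `w` contains the classical pattern `p`. -/
def ContainsC {k n : ℕ} (p : Equiv.Perm (Fin k)) (w : Equiv.Perm (Fin n)) : Prop :=
  ∃ f : Fin k → Fin n, IsOcc p w f

/-- The set of permutations avoiding the classical pattern `p`. -/
def AvC {k : ℕ} (p : Equiv.Perm (Fin k)) : Set Permutation :=
  {w : Permutation | ¬ ContainsC p w.2}

/-- A barred pattern: a permutation together with a (nonempty) set of barred
positions. -/
structure BarredPattern where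
  len : ℕ
  perm : Equiv.Perm (Fin len)
  barred : Finset (Fin len)
  barred_nonempty : barred.Nonempty

/-- A barred pattern is proper if the barred positions form a proper subset
of all positions. -/
def BarredPattern.Proper (b : BarredPattern) : Prop := b.barred ≠ Finset.univ

/-- The underlying classical pattern of a barred pattern. -/
def BarredPattern.toPermutation (b : BarredPattern) : Permutation := ⟨b.len, b.perm⟩

/-- `w` contains the barred pattern `b`: there is an occurrence of the
unbarred portion of `b` in `w` (recorded by the values of `g` on the unbarred
positions) that cannot be completed to an occurrence of the underlying
classical pattern of `b` with the barred letters filled in, in their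
prescribed relative positions and values. -/
def BarredPattern.ContainedIn (b : BarredPattern) {n : ℕ}
    (w : Equiv.Perm (Fin n)) : Prop :=
  ∃ g : Fin b.len → Fin n,
    (∀ i j : Fin b.len, i ∉ b.barred → j ∉ b.barred → i < j → g i < g j) ∧
    (∀ i j : Fin b.len, i ∉ b.barred → j ∉ b.barred →
      (b.perm i < b.perm j ↔ w (g i) < w (g j))) ∧
    ¬ ∃ f : Fin b.len → Fin n, IsOcc b.perm w f ∧ ∀ i ∉ b.barred, f i = g i

/-- The set of permutations avoiding the barred pattern `b`. -/
def AvB (b : BarredPattern) : Set Permutation :=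
  {w : Permutation | ¬ b.ContainedIn w.2}

/-- A vincular pattern: a permutation together with a set of bonds, encoded
as elements of `Fin (len+1)`: bond `0` bonds the first letter to the left
endpoint `*`, bond `len` bonds the last letter to the right endpoint `*`, and
a bond `β` with `0 < β < len` bonds the letters in (0-indexed) positions
`β - 1` and `β`. -/
structure VincularPattern where
  len : ℕ
  perm : Equiv.Perm (Fin len)
  bonds : Finset (Fin (len + 1))

/-- A vincular pattern is proper if it has at least one bond and its letters
are not all bonded together into a single block. -/
def VincularPattern.Proper (v : VincularPattern) : Prop :=
  v.bonds.Nonempty ∧ ∃ β : Fin (v.len + 1), 0 < (β : ℕ) ∧ (β : ℕ) < v.len ∧ β ∉ v.bonds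

/-- The underlying classical pattern of a vincular pattern. -/
def VincularPattern.toPermutation (v : VincularPattern) : Permutation := ⟨v.len, v.perm⟩

/-- `w` contains the vincular pattern `v`: there is an occurrence of the
underlying classical pattern of `v` in which any two bonded letters occupy
adjacent positions of `w`, a letter bonded to the left `*` occupies the first
position of `w`, and a letter bonded to the right `*` occupies the last
position of `w`. -/
def VincularPattern.ContainedIn (v : VincularPattern) {n : ℕ}
    (w : Equiv.Perm (Fin n)) : Prop :=
  ∃ f : Fin v.len → Fin n,
    IsOcc v.perm w f ∧
    (∀ β : Fin (v.len + 1), β ∈ v.bonds →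
      ∀ (h1 : 0 < (β : ℕ)) (h2 : (β : ℕ) < v.len),
        (f ⟨(β : ℕ), h2⟩ : ℕ) = (f ⟨(β : ℕ) - 1, by omega⟩ : ℕ) + 1) ∧
    ((0 : Fin (v.len + 1)) ∈ v.bonds → ∀ h : 0 < v.len, (f ⟨0, h⟩ : ℕ) = 0) ∧
    ((⟨v.len, by omega⟩ : Fin (v.len + 1)) ∈ v.bonds →
      ∀ h : 0 < v.len, (f ⟨v.len - 1, by omega⟩ : ℕ) = n - 1)

/-- The set of permutations avoiding the vincular pattern `v`. -/
def AvV (v : VincularPattern) : Set Permutation :=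
  {w : Permutation | ¬ v.ContainedIn w.2}

/-- `bond b`: the set of vincular patterns obtained from the barred pattern
`b` by deleting a nonempty subset `T` of the barred letters (flattening the
remaining letters to a pattern, using the order-preserving bijection `r` onto
the undeleted positions), placing a bond at each site where a letter was
deleted (a site is indexed by the number of undeleted positions to the left
of the deleted letter), and ignoring the bars on any remaining barred
letters. -/
def BarredPattern.bond (b : BarredPattern) : Set VincularPattern :=
  {v : VincularPattern | ∃ T : Finset (Fin b.len), T ⊆ b.barred ∧ T.Nonempty ∧
    ∃ r : Fin v.len → Fin b.len, StrictMono r ∧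
      (∀ i : Fin b.len, i ∉ T ↔ ∃ j : Fin v.len, r j = i) ∧
      (∀ i j : Fin v.len, v.perm i < v.perm j ↔ b.perm (r i) < b.perm (r j)) ∧
      ∀ β : Fin (v.len + 1), β ∈ v.bonds ↔
        ∃ t ∈ T, (β : ℕ) = (Finset.univ.filter fun i : Fin b.len => i ∉ T ∧ i < t).card}

/-- A proper barred pattern `b` is naturally coincidental (nat-co) if
`Av(b) = Av(bond b)`. -/
def BarredPattern.NatCo (b : BarredPattern) : Prop :=
  AvB b = ⋂ v ∈ b.bond, AvV v

/-- `q` is obtained from `p` by inserting a single new letter in position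
`pos`: deleting position `pos` from `q` leaves a sequence order-isomorphic
to `p`. -/
def IsInsertionAt {k : ℕ} (p : Equiv.Perm (Fin k)) (pos : Fin (k + 1))
    (q : Equiv.Perm (Fin (k + 1))) : Prop :=
  ∀ i j : Fin k, p i < p j ↔ q (pos.succAbove i) < q (pos.succAbove j)

/-- `bar v`: the set of barred patterns obtained from the vincular pattern
`v` by replacing a single bond (at site `β`) of `v` by an inserted barred
letter, in such a way that the resulting underlying classical pattern does
not contain `v`, ignoring all remaining bonds. -/
def VincularPattern.bar (v : VincularPattern) : Set BarredPattern :=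
  {b : BarredPattern | ∃ β ∈ v.bonds, ∃ hlen : b.len = v.len + 1,
    b.barred = {finCongr hlen.symm β} ∧
    IsInsertionAt v.perm β ((finCongr hlen).permCongr b.perm) ∧
    ¬ v.ContainedIn ((finCongr hlen).permCongr b.perm)}

/-- A vincular pattern is coincidental if its avoidance set equals the
avoidance set of some finite set of proper barred patterns. -/
def VincularPattern.Coincidental (v : VincularPattern) : Prop :=
  ∃ B : Set BarredPattern, B.Finite ∧ (∀ b ∈ B, b.Proper) ∧
    AvV v = ⋂ b ∈ B, AvB b

/-- `(i, j)` (0-indexed positions) delimits a maximal factor of consecutive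
barred letters of the barred pattern `b`, thereby determining a boycott
of `b`. -/
def BarredPattern.IsBoycottPair (b : BarredPattern) (i j : ℕ) : Prop :=
  i ≤ j ∧ j < b.len ∧
  (∀ p : Fin b.len, i ≤ (p : ℕ) → (p : ℕ) ≤ j → p ∈ b.barred) ∧
  (∀ p : Fin b.len, (p : ℕ) + 1 = i → p ∉ b.barred) ∧
  (∀ p : Fin b.len, (p : ℕ) = j + 1 → p ∉ b.barred)

/-- The boycott `X` determined by the maximal barred factor `(i, j)` of `b`:
the set of (1-indexed) values of the letters in positions `i-1, i, …, j, j+1`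
(those endpoints that exist). -/
def BarredPattern.boycottSet (b : BarredPattern) (i j : ℕ) : Finset ℕ :=
  (Finset.univ.filter fun p : Fin b.len => i ≤ (p : ℕ) + 1 ∧ (p : ℕ) ≤ j + 1).image
    fun p => (b.perm p : ℕ) + 1

/-- `B(X)`: the barred values of the boycott of `b` determined by `(i, j)`. -/
def BarredPattern.boycottB (b : BarredPattern) (i j : ℕ) : Finset ℕ :=
  (Finset.univ.filter fun p : Fin b.len => i ≤ (p : ℕ) ∧ (p : ℕ) ≤ j).image
    fun p => (b.perm p : ℕ) + 1

/-- `U(X)`: the unbarred values of the boycott of `b` determined by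
`(i, j)`. -/
def BarredPattern.boycottU (b : BarredPattern) (i j : ℕ) : Finset ℕ :=
  (Finset.univ.filter fun p : Fin b.len => (p : ℕ) + 1 = i ∨ (p : ℕ) = j + 1).image
    fun p => (b.perm p : ℕ) + 1

/-- The barred pattern `41‾352`: the permutation `41352` with the letter `3`
(in position `2`, 0-indexed) barred. -/
def barred41352 : BarredPattern where
  len := 5
  perm := ⟨![3, 0, 2, 4, 1], ![1, 4, 2, 0, 3], by decide, by decide⟩
  barred := {2}
  barred_nonempty := Finset.singleton_nonempty _

/-- The vincular pattern `3[14]2`: the permutation `3142` with a bond between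
the letters `1` and `4` (positions `1` and `2`, so bond site `2`). -/
def vincular3142 : VincularPattern where
  len := 4
  perm := ⟨![2, 0, 3, 1], ![1, 3, 0, 2], by decide, by decide⟩
  bonds := {2}

theorem barred41352_barred : barred41352.barred = ({2} : Finset (Fin 5)) := rfl

theorem vincular3142_bonds : vincular3142.bonds = ({2} : Finset (Fin 5)) := rfl

theorem barred41352_perm_apply (i : Fin 5) :
    barred41352.perm i = (![3, 0, 2, 4, 1] : Fin 5 → Fin 5) i := rfl

theorem barred41352_mem (i : Fin 5) : i ∈ barred41352.barred ↔ (i : ℕ) = 2 := by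
  show i ∈ ({2} : Finset (Fin 5)) ↔ _
  rw [Finset.mem_singleton, Fin.ext_iff]
  rfl

theorem vincular3142_mem (i : Fin 5) : i ∈ vincular3142.bonds ↔ (i : ℕ) = 2 := by
  show i ∈ ({2} : Finset (Fin 5)) ↔ _
  rw [Finset.mem_singleton, Fin.ext_iff]
  rfl

theorem vincular3142_len : vincular3142.len = 4 := rfl

theorem vincular3142_perm_apply (i : Fin 4) :
    vincular3142.perm i = (![2, 0, 3, 1] : Fin 4 → Fin 4) i := rfl

/-- A permutation avoids the barred pattern `41‾352` if and
only if it avoids the vincular pattern `3[14]2`;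
that is, `Av(41‾352) = Av(3[14]2)`. -/
theorem av_barred41352_eq_av_vincular3142 :
    AvB barred41352 = AvV vincular3142 := by
  ext x
  obtain ⟨n, w⟩ := x
  simp only [AvB, AvV, Set.mem_setOf_eq, not_iff_not]
  change ¬ barred41352.ContainedIn w ↔ ¬ vincular3142.ContainedIn w
  rw [not_iff_not]
  constructor
  · -- barred containment → vincular containment
    rintro ⟨g, hmono, hval, hnext⟩
    have h0 : (0 : Fin 5) ∉ barred41352.barred := by simp [barred41352_mem]
    have h1 : (1 : Fin 5) ∉ barred41352.barred := by simp [barred41352_mem]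
    have h3 : (3 : Fin 5) ∉ barred41352.barred := by simp [barred41352_mem]
    have h4 : (4 : Fin 5) ∉ barred41352.barred := by simp [barred41352_mem]
    have hab : (g (0:Fin 5) : ℕ) < g (1:Fin 5) := hmono (0:Fin 5) (1:Fin 5) h0 h1 (by decide)
    have hbc : (g (1:Fin 5) : ℕ) < g (3:Fin 5) := hmono (1:Fin 5) (3:Fin 5) h1 h3 (by decide)
    have hcd : (g (3:Fin 5) : ℕ) < g (4:Fin 5) := hmono (3:Fin 5) (4:Fin 5) h3 h4 (by decide)
    have hbd : (w (g (1:Fin 5)) : ℕ) < w (g (4:Fin 5)) := (hval (1:Fin 5) (4:Fin 5) h1 h4).mp (by decide)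
    have hda : (w (g (4:Fin 5)) : ℕ) < w (g (0:Fin 5)) := (hval (4:Fin 5) (0:Fin 5) h4 h0).mp (by decide)
    have hac : (w (g (0:Fin 5)) : ℕ) < w (g (3:Fin 5)) := (hval (0:Fin 5) (3:Fin 5) h0 h3).mp (by decide)
    have key : ∀ e : Fin n, (g (1:Fin 5) : ℕ) < e → (e : ℕ) < g (3:Fin 5) →
        ¬((w (g (4:Fin 5)) : ℕ) < w e ∧ (w e : ℕ) < w (g (0:Fin 5))) := by
      rintro e he1 he2 ⟨hde, hea⟩
      apply hnext
      refine ⟨![g (0:Fin 5), g (1:Fin 5), e, g (3:Fin 5), g (4:Fin 5)], ⟨?_, ?_⟩, ?_⟩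
      · show StrictMono (![g (0:Fin 5), g (1:Fin 5), e, g (3:Fin 5), g (4:Fin 5)] : Fin 5 → Fin n)
        intro i j hij
        fin_cases i <;> fin_cases j <;>
          simp only [Fin.mk_lt_mk, Fin.reduceLT, Nat.reduceLT] at hij <;>
          simp only [Fin.zero_eta, Fin.mk_one, Fin.reduceFinMk, Fin.isValue,
            Matrix.cons_val_zero, Matrix.cons_val_one, Matrix.cons_val_two,
            Matrix.cons_val_three, Matrix.cons_val_four, Matrix.head_cons,
            Matrix.tail_cons, Fin.lt_def] <;> omega
      · show ∀ i j : Fin 5, barred41352.perm i < barred41352.perm j ↔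
          w ((![g (0:Fin 5), g (1:Fin 5), e, g (3:Fin 5), g (4:Fin 5)] : Fin 5 → Fin n) i) <
            w ((![g (0:Fin 5), g (1:Fin 5), e, g (3:Fin 5), g (4:Fin 5)] : Fin 5 → Fin n) j)
        intro i j
        fin_cases i <;> fin_cases j <;>
          simp only [barred41352_perm_apply, Equiv.coe_fn_mk, Fin.zero_eta, Fin.mk_one,
            Fin.reduceFinMk, Fin.isValue, Matrix.cons_val_zero, Matrix.cons_val_one,
            Matrix.cons_val_two, Matrix.cons_val_three, Matrix.cons_val_four,
            Matrix.head_cons, Matrix.tail_cons, Fin.reduceLT, iff_true, iff_false,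
            true_iff, false_iff, Fin.lt_def, not_lt, lt_self_iff_false] <;> omega
      · show ∀ i : Fin 5, i ∉ barred41352.barred →
          (![g (0:Fin 5), g (1:Fin 5), e, g (3:Fin 5), g (4:Fin 5)] : Fin 5 → Fin n) i = g i
        intro i hi
        fin_cases i <;>
          first
            | exact (hi ((barred41352_mem _).mpr rfl)).elim
            | simp
    have hcn : (g (3:Fin 5) : ℕ) < n := (g (3:Fin 5)).isLt
    have hdn : (g (4:Fin 5) : ℕ) < n := (g (4:Fin 5)).isLt
    set S : Finset (Fin n) :=
      Finset.univ.filter (fun x : Fin n => (g (1:Fin 5) : ℕ) ≤ x ∧ (x : ℕ) < g (3:Fin 5) ∧ (w x : ℕ) < w (g (4:Fin 5))) with hS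
    have hSne : S.Nonempty := by
      refine ⟨g (1:Fin 5), ?_⟩
      simp only [hS, Finset.mem_filter, Finset.mem_univ, true_and]
      exact ⟨le_rfl, hbc, hbd⟩
    set e : Fin n := S.max' hSne with he
    have heS : e ∈ S := S.max'_mem hSne
    have hbe : (g (1:Fin 5) : ℕ) ≤ e := (Finset.mem_filter.mp heS).2.1
    have hec : (e : ℕ) < g (3:Fin 5) := (Finset.mem_filter.mp heS).2.2.1
    have hed : (w e : ℕ) < w (g (4:Fin 5)) := (Finset.mem_filter.mp heS).2.2.2
    have he'n : (e : ℕ) + 1 < n := by omega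
    set e' : Fin n := ⟨(e : ℕ) + 1, he'n⟩ with he'
    have he'val : (e' : ℕ) = (e : ℕ) + 1 := rfl
    have hae' : (w (g (0:Fin 5)) : ℕ) < w e' := by
      rcases eq_or_lt_of_le (show (e' : ℕ) ≤ g (3:Fin 5) by omega) with hcase | hcase
      · have he3 : e' = g (3:Fin 5) := Fin.ext hcase
        rw [he3]; exact hac
      · have hkey := key e' (by omega) hcase
        have hne_d : (w e' : ℕ) ≠ (w (g (4:Fin 5)) : ℕ) := by
          intro hcontra
          have he4 : e' = g (4:Fin 5) := w.injective (Fin.ext hcontra)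
          have : (e' : ℕ) = g (4:Fin 5) := by rw [he4]
          omega
        have hde'' : (w (g (4:Fin 5)) : ℕ) < w e' := by
          rcases lt_or_ge (w e' : ℕ) (w (g (4:Fin 5)) : ℕ) with hlt | hle
          · exfalso
            have he'S : e' ∈ S := by
              simp only [hS, Finset.mem_filter, Finset.mem_univ, true_and]
              exact ⟨by omega, hcase, hlt⟩
            have hle' : (e' : ℕ) ≤ e := S.le_max' e' he'S
            omega
          · rcases lt_or_eq_of_le hle with h | h
            · exact h
            · exact absurd h.symm hne_d
        have hne_a : (w e' : ℕ) ≠ (w (g (0:Fin 5)) : ℕ) := by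
          intro hcontra
          have he0 : e' = g (0:Fin 5) := w.injective (Fin.ext hcontra)
          have : (e' : ℕ) = g (0:Fin 5) := by rw [he0]
          omega
        rcases lt_or_ge (w (g (0:Fin 5)) : ℕ) (w e' : ℕ) with h | h
        · exact h
        · exfalso
          rcases lt_or_eq_of_le h with h' | h'
          · exact hkey ⟨hde'', h'⟩
          · exact hne_a h'
    have hde' : (w (g (4:Fin 5)) : ℕ) < w e' := by omega
    refine ⟨![g (0:Fin 5), e, e', g (4:Fin 5)], ⟨?_, ?_⟩, ?_, ?_, ?_⟩
    · show StrictMono (![g (0:Fin 5), e, e', g (4:Fin 5)] : Fin 4 → Fin n)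
      intro i j hij
      fin_cases i <;> fin_cases j <;>
        simp only [Fin.mk_lt_mk, Fin.reduceLT, Nat.reduceLT] at hij <;>
        simp only [Fin.zero_eta, Fin.mk_one, Fin.reduceFinMk, Fin.isValue,
          Matrix.cons_val_zero, Matrix.cons_val_one, Matrix.cons_val_two,
          Matrix.cons_val_three, Matrix.cons_val_four, Matrix.head_cons,
          Matrix.tail_cons, Fin.lt_def] <;> omega
    · show ∀ i j : Fin 4, vincular3142.perm i < vincular3142.perm j ↔
        w ((![g (0:Fin 5), e, e', g (4:Fin 5)] : Fin 4 → Fin n) i) <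
          w ((![g (0:Fin 5), e, e', g (4:Fin 5)] : Fin 4 → Fin n) j)
      intro i j
      fin_cases i <;> fin_cases j <;>
        simp only [vincular3142_perm_apply, Equiv.coe_fn_mk, Fin.zero_eta, Fin.mk_one,
          Fin.reduceFinMk, Fin.isValue, Matrix.cons_val_zero, Matrix.cons_val_one,
          Matrix.cons_val_two, Matrix.cons_val_three, Matrix.cons_val_four,
          Matrix.head_cons, Matrix.tail_cons, Fin.reduceLT, iff_true, iff_false,
          true_iff, false_iff, Fin.lt_def, not_lt, lt_self_iff_false] <;> omega
    · intro β hβ hb1 hb2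
      have hβ2 : β = (2 : Fin 5) := Finset.mem_singleton.mp hβ
      subst hβ2
      exact rfl
    · intro hmem
      exact absurd ((vincular3142_mem _).mp hmem) (by decide)
    · intro hmem
      exact absurd ((vincular3142_mem _).mp hmem) (by decide)
  · -- vincular containment → barred containment
    rintro ⟨f, ⟨hfmono, hford⟩, hbond, -, -⟩
    have hadj : (f (2:Fin 4) : ℕ) = (f (1:Fin 4) : ℕ) + 1 := by
      have := hbond (2:Fin 5) ((vincular3142_mem _).mpr rfl) (by decide) (by decide)
      exact this
    have hab : (f (0:Fin 4) : ℕ) < f (1:Fin 4) := hfmono (show (0:Fin 4) < 1 by decide)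
    have hbc : (f (1:Fin 4) : ℕ) < f (2:Fin 4) := hfmono (show (1:Fin 4) < 2 by decide)
    have hcd : (f (2:Fin 4) : ℕ) < f (3:Fin 4) := hfmono (show (2:Fin 4) < 3 by decide)
    have hbd : (w (f (1:Fin 4)) : ℕ) < w (f (3:Fin 4)) := (hford (1:Fin 4) (3:Fin 4)).mp (by decide)
    have hda : (w (f (3:Fin 4)) : ℕ) < w (f (0:Fin 4)) := (hford (3:Fin 4) (0:Fin 4)).mp (by decide)
    have hac : (w (f (0:Fin 4)) : ℕ) < w (f (2:Fin 4)) := (hford (0:Fin 4) (2:Fin 4)).mp (by decide)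
    refine ⟨![f (0:Fin 4), f (1:Fin 4), f (1:Fin 4), f (2:Fin 4), f (3:Fin 4)], ?_, ?_, ?_⟩
    · show ∀ i j : Fin 5, i ∉ barred41352.barred → j ∉ barred41352.barred → i < j →
        (![f (0:Fin 4), f (1:Fin 4), f (1:Fin 4), f (2:Fin 4), f (3:Fin 4)] : Fin 5 → Fin n) i <
          (![f (0:Fin 4), f (1:Fin 4), f (1:Fin 4), f (2:Fin 4), f (3:Fin 4)] : Fin 5 → Fin n) j
      intro i j hi hj hij
      fin_cases i <;> fin_cases j <;>
        first
          | exact (hi ((barred41352_mem _).mpr rfl)).elim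
          | exact (hj ((barred41352_mem _).mpr rfl)).elim
          | (simp only [Fin.mk_lt_mk, Fin.reduceLT, Nat.reduceLT] at hij <;>
             simp only [Fin.zero_eta, Fin.mk_one, Fin.reduceFinMk, Fin.isValue,
               Matrix.cons_val_zero, Matrix.cons_val_one, Matrix.cons_val_two,
               Matrix.cons_val_three, Matrix.cons_val_four, Matrix.head_cons,
               Matrix.tail_cons, Fin.lt_def] <;> omega)
    · show ∀ i j : Fin 5, i ∉ barred41352.barred → j ∉ barred41352.barred →
        (barred41352.perm i < barred41352.perm j ↔
          w ((![f (0:Fin 4), f (1:Fin 4), f (1:Fin 4), f (2:Fin 4), f (3:Fin 4)] : Fin 5 → Fin n) i) <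
            w ((![f (0:Fin 4), f (1:Fin 4), f (1:Fin 4), f (2:Fin 4), f (3:Fin 4)] : Fin 5 → Fin n) j))
      intro i j hi hj
      fin_cases i <;> fin_cases j <;>
        first
          | exact (hi ((barred41352_mem _).mpr rfl)).elim
          | exact (hj ((barred41352_mem _).mpr rfl)).elim
          | (simp only [barred41352_perm_apply, Equiv.coe_fn_mk, Fin.zero_eta, Fin.mk_one,
               Fin.reduceFinMk, Fin.isValue, Matrix.cons_val_zero, Matrix.cons_val_one,
               Matrix.cons_val_two, Matrix.cons_val_three, Matrix.cons_val_four,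
               Matrix.head_cons, Matrix.tail_cons, Fin.reduceLT, iff_true, iff_false,
               true_iff, false_iff, Fin.lt_def, not_lt, lt_self_iff_false] <;> omega)
    · rintro ⟨h, ⟨hhmono, -⟩, hagree⟩
      have e1 : h (1:Fin 5) = f (1:Fin 4) := by
        have := hagree (1:Fin 5) (fun hm => absurd ((barred41352_mem _).mp hm) (by decide)); simpa using this
      have e3 : h (3:Fin 5) = f (2:Fin 4) := by
        have := hagree (3:Fin 5) (fun hm => absurd ((barred41352_mem _).mp hm) (by decide)); simpa using this
      have l12 : (h (1:Fin 5) : ℕ) < h (2:Fin 5) := hhmono (show (1:Fin 5) < 2 by decide)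
      have l23 : (h (2:Fin 5) : ℕ) < h (3:Fin 5) := hhmono (show (2:Fin 5) < 3 by decide)
      rw [e1] at l12; rw [e3] at l23
      omega
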